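/- Let q be a prime power, α ∈ F_q^{n+1} with rank H_{n₁,n₂}(α) = r (where n₁ = ⌊(n+2)/2⌋, n₂ = ⌊(n+3)/2⌋), and let l,m ≥ 1 with l+m-2 = n. Then rank H_{l,m}(α) = r if min{l,m} ≥ r, and rank H_{l,m}(α) = min{l,m} if min{l,m} < r. -/

import Mathlib

open Matrix Polynomial

/-- The `l × m` Hankel matrix whose `(i,j)` entry (zero-indexed) is `α (i + j)`. -/
def hankel (F : Type) [Field F] (l m : ℕ) (α : ℕ → F) : Matrix (Fin l) (Fin m) F :=
  Matrix.of fun i j => α (i.1 + j.1)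

/-- `ρ(α)`: the largest `l ≤ n₁ = (n+2)/2` such that the top-left `l × l` Hankel matrix
of `α` is invertible (`0` if none exists). -/
noncomputable def rhoC (F : Type) [Field F] (n : ℕ) (α : ℕ → F) : ℕ :=
  sSup {l | l ≤ (n + 2) / 2 ∧ (hankel F l l α).det ≠ 0}

/-- `π(α) = rank H_{n₁,n₂}(α) - ρ(α)`. -/
noncomputable def piC (F : Type) [Field F] (n : ℕ) (α : ℕ → F) : ℕ :=
  (hankel F ((n + 2) / 2) ((n + 3) / 2) α).rank - rhoC F n α

/-- `deg B ≤ k` for an integer bound `k` (so `k < 0` forces `B = 0`). -/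
def degLE (F : Type) [Field F] (B : Polynomial F) (k : ℤ) : Prop :=
  ∀ i : ℕ, k < (i : ℤ) → B.coeff i = 0

/-- `A₁, A₂` are characteristic polynomials for the sequence `α` (of length `n+1`) with
first characteristic degree `c₁ = r` and second characteristic degree `c₂ = n+2-r`:
the kernels of all the Hankel matrices `H_{l,m}(α)`, `l+m-2 = n`, consist exactly of the
(coefficient vectors of) polynomials `B₁A₁ + B₂A₂` with `deg B₁ ≤ m - c₁ - 1` and
`deg B₂ ≤ m - c₂ - 1`. -/
def IsCharSeq (F : Type) [Field F] (n r : ℕ) (A₁ A₂ : Polynomial F) (α : ℕ → F) : Prop :=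
  ∀ l m : ℕ, 1 ≤ l → 1 ≤ m → l + m = n + 2 →
    {v : Fin m → F | (hankel F l m α).mulVec v = 0} =
    {v : Fin m → F | ∃ B₁ B₂ : Polynomial F,
      degLE F B₁ ((m : ℤ) - r - 1) ∧ degLE F B₂ ((m : ℤ) - ((n : ℤ) + 2 - r) - 1) ∧
      v = fun i : Fin m => (B₁ * A₁ + B₂ * A₂).coeff (i : ℕ)}

/-- A sequence `α ∈ F^{n+1}` viewed as a function `ℕ → F` (zero beyond index `n`). -/
def extSeq (F : Type) [Field F] (n : ℕ) (α : Fin (n + 1) → F) : ℕ → F :=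
  fun i => if h : i < n + 1 then α ⟨i, h⟩ else 0

/-- The extension of a sequence of length `n+1` by a new entry `c` at index `n+1`. -/
def extendSeq (F : Type) [Field F] (n : ℕ) (α : ℕ → F) (c : F) : ℕ → F :=
  fun i => if i = n + 1 then c else α i


noncomputable def snocLM (F : Type) [Field F] (m : ℕ) : (Fin m → F) →ₗ[F] (Fin (m+1) → F) where
  toFun v := Fin.snoc v 0
  map_add' v w := by
    funext i
    refine Fin.lastCases ?_ (fun i => ?_) i <;> simp
  map_smul' c v := by
    funext i
    refine Fin.lastCases ?_ (fun i => ?_) i <;> simp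

lemma snocLM_inj (F : Type) [Field F] (m : ℕ) : Function.Injective (snocLM F m) := by
  intro v w h
  funext i
  have := congrFun h (Fin.castSucc i)
  simpa [snocLM] using this

lemma rank_add_ker (F : Type) [Field F] (l m : ℕ) (A : Matrix (Fin l) (Fin m) F) :
    A.rank + Module.finrank F (LinearMap.ker A.mulVecLin) = m := by
  have := LinearMap.finrank_range_add_finrank_ker A.mulVecLin
  rw [Module.finrank_fin_fun] at this
  exact this

lemma snoc_mem_ker (F : Type) [Field F] (l m : ℕ) (α : ℕ → F) (v : Fin m → F)
    (hv : (hankel F (l+1) m α).mulVec v = 0) :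
    (hankel F l (m+1) α).mulVec (Fin.snoc v 0) = 0 := by
  funext i
  have h0 := congrFun hv ⟨i.1, by omega⟩
  simp only [Matrix.mulVec, dotProduct, hankel, Matrix.of_apply, Pi.zero_apply] at h0 ⊢
  rw [Fin.sum_univ_castSucc]
  simpa [Fin.snoc_castSucc, Fin.snoc_last] using h0

lemma cons_mem_ker (F : Type) [Field F] (l m : ℕ) (α : ℕ → F) (v : Fin m → F)
    (hv : (hankel F (l+1) m α).mulVec v = 0) :
    (hankel F l (m+1) α).mulVec (Fin.cons 0 v) = 0 := by
  funext i
  have h0 := congrFun hv ⟨i.1 + 1, by omega⟩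
  simp only [Matrix.mulVec, dotProduct, hankel, Matrix.of_apply, Pi.zero_apply] at h0 ⊢
  rw [Fin.sum_univ_succ]
  simp only [Fin.cons_zero, Fin.cons_succ, mul_zero, zero_add, Fin.val_succ]
  rw [← h0]
  apply Finset.sum_congr rfl
  intro j _
  congr 2
  omega

/-- Core lemma: if `H_{l+1,m}` does not have full column rank, then moving one step towards
more columns does not increase the rank. -/
lemma rank_shift_le (F : Type) [Field F] (l m : ℕ) (α : ℕ → F)
    (h : (hankel F (l+1) m α).rank < m) :
    (hankel F l (m+1) α).rank ≤ (hankel F (l+1) m α).rank := by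
  classical
  set A := hankel F (l+1) m α with hAdef
  set A' := hankel F l (m+1) α with hA'def
  set K := LinearMap.ker A.mulVecLin with hKdef
  set K' := LinearMap.ker A'.mulVecLin with hK'def
  have hA : A.rank + Module.finrank F K = m := rank_add_ker F _ _ A
  have hA' : A'.rank + Module.finrank F K' = m + 1 := rank_add_ker F _ _ A'
  suffices h2 : Module.finrank F K + 1 ≤ Module.finrank F K' by omega
  have hKne : ∃ v ∈ K, v ≠ 0 := by
    by_contra hc
    push_neg at hc
    have : K = ⊥ := by
      ext x; simp only [Submodule.mem_bot]
      constructor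
      · intro hx; exact hc x hx
      · rintro rfl; exact K.zero_mem
    rw [this, finrank_bot] at hA
    omega
  obtain ⟨v1, hv1K, hv1ne⟩ := hKne
  -- the set of indices where some kernel vector is nonzero
  set T : Finset (Fin m) := Finset.univ.filter (fun j => ∃ v ∈ K, v j ≠ 0) with hT
  have hTne : T.Nonempty := by
    obtain ⟨j, hj⟩ := Function.ne_iff.mp hv1ne
    exact ⟨j, by simp [hT]; exact ⟨v1, hv1K, hj⟩⟩
  set j₀ := T.max' hTne with hj₀
  obtain ⟨v₀, hv₀K, hv₀ne⟩ : ∃ v ∈ K, v j₀ ≠ 0 := by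
    have := T.max'_mem hTne
    simpa [hT] using this
  have hmax : ∀ w ∈ K, ∀ j : Fin m, j₀ < j → w j = 0 := by
    intro w hw j hj
    by_contra hc
    have : j ∈ T := by simp [hT]; exact ⟨w, hw, hc⟩
    exact absurd (T.le_max' j this) (not_le.mpr hj)
  set U := K.map (snocLM F m) with hU
  have hUle : U ≤ K' := by
    rintro x ⟨w, hw, rfl⟩
    have hw' : A.mulVec w = 0 := hw
    have := snoc_mem_ker F l m α w hw'
    exact this
  have hxK' : (Fin.cons 0 v₀ : Fin (m+1) → F) ∈ K' := by
    have hv₀' : A.mulVec v₀ = 0 := hv₀K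
    have := cons_mem_ker F l m α v₀ hv₀'
    exact this
  have hxU : (Fin.cons 0 v₀ : Fin (m+1) → F) ∉ U := by
    rintro ⟨w, hwK, hwx⟩
    have heval := congrFun hwx (Fin.succ j₀)
    rw [Fin.cons_succ] at heval
    have hz : (snocLM F m) w (Fin.succ j₀) = 0 := by
      by_cases hj : (j₀ : ℕ) + 1 < m
      · have : Fin.succ j₀ = Fin.castSucc ⟨(j₀ : ℕ) + 1, hj⟩ := by
          apply Fin.ext; simp
        rw [this]
        rw [show ((snocLM F m) w) = Fin.snoc w 0 from rfl, Fin.snoc_castSucc]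
        apply hmax w hwK
        simp [Fin.lt_def]
      · have hjm : (j₀ : ℕ) + 1 = m := by omega
        have : Fin.succ j₀ = Fin.last m := by
          apply Fin.ext; simp [hjm]
        rw [this]
        simp [snocLM]
    rw [heval] at hz
    exact hv₀ne hz
  have hUlt : U < K' := lt_of_le_of_ne hUle (by
    intro heq
    exact hxU (heq ▸ hxK'))
  have h3 : Module.finrank F U < Module.finrank F K' :=
    Submodule.finrank_lt_finrank_of_lt hUlt
  have h4 : Module.finrank F U = Module.finrank F K := by
    rw [hU]
    exact (LinearEquiv.finrank_eq (Submodule.equivMapOfInjective _ (snocLM_inj F m) K)).symm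
  omega

lemma hankel_transpose (F : Type) [Field F] (l m : ℕ) (α : ℕ → F) :
    (hankel F l m α)ᵀ = hankel F m l α := by
  ext i j
  simp [hankel, Matrix.transpose_apply, add_comm]

lemma rank_hankel_comm (F : Type) [Field F] (l m : ℕ) (α : ℕ → F) :
    (hankel F l m α).rank = (hankel F m l α).rank := by
  rw [← hankel_transpose, Matrix.rank_transpose]

/-- Transposed version of the core lemma. -/
lemma rank_shift_le' (F : Type) [Field F] (l m : ℕ) (α : ℕ → F)
    (h : (hankel F l (m+1) α).rank < l) :
    (hankel F (l+1) m α).rank ≤ (hankel F l (m+1) α).rank := by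
  rw [rank_hankel_comm F l (m+1) α] at h ⊢
  rw [rank_hankel_comm F (l+1) m α]
  exact rank_shift_le F m l α h

lemma claimA (F : Type) [Field F] (n r : ℕ) (α : ℕ → F)
    (hr : (hankel F ((n + 2) / 2) ((n + 3) / 2) α).rank = r) :
    ∀ j k m : ℕ, k + m = n + 2 → k + j = (n + 2) / 2 →
      min k r ≤ (hankel F k m α).rank := by
  intro j
  induction j with
  | zero =>
    intro k m h1 h2
    have hk : k = (n + 2) / 2 := by omega
    subst hk
    have hm : m = (n + 3) / 2 := by omega
    subst hm
    rw [hr]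
    exact min_le_right _ _
  | succ j ih =>
    intro k m h1 h2
    obtain ⟨m', rfl⟩ : ∃ m', m = m' + 1 := ⟨m - 1, by omega⟩
    by_contra hc
    push_neg at hc
    have h5 : (hankel F k (m' + 1) α).rank < k :=
      lt_of_lt_of_le hc (min_le_left _ _)
    have h6 := rank_shift_le' F k m' α h5
    have h7 := ih (k + 1) m' (by omega) (by omega)
    omega

lemma claimB (F : Type) [Field F] (n r : ℕ) (α : ℕ → F)
    (hr : (hankel F ((n + 2) / 2) ((n + 3) / 2) α).rank = r)
    (hrsmall : r < (n + 3) / 2) :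
    ∀ j k m : ℕ, k + m = n + 2 → k + j = (n + 2) / 2 →
      (hankel F k m α).rank ≤ r := by
  intro j
  induction j with
  | zero =>
    intro k m h1 h2
    have hk : k = (n + 2) / 2 := by omega
    subst hk
    have hm : m = (n + 3) / 2 := by omega
    subst hm
    exact le_of_eq hr
  | succ j ih =>
    intro k m h1 h2
    obtain ⟨m', rfl⟩ : ∃ m', m = m' + 1 := ⟨m - 1, by omega⟩
    have h7 := ih (k + 1) m' (by omega) (by omega)
    have hcond : (hankel F (k + 1) m' α).rank < m' := by omega
    have h6 := rank_shift_le F k m' α hcond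
    omega

lemma mainL (F : Type) [Field F] (n k m r : ℕ) (α : ℕ → F)
    (hkm : k + m = n + 2) (hkle : k ≤ (n + 2) / 2)
    (hr : (hankel F ((n + 2) / 2) ((n + 3) / 2) α).rank = r) :
    (hankel F k m α).rank = min (min k m) r := by
  have hrle : r ≤ (n + 2) / 2 := by
    rw [← hr]; exact Matrix.rank_le_height _
  have hA := claimA F n r α hr ((n + 2) / 2 - k) k m hkm (by omega)
  have hub : (hankel F k m α).rank ≤ k := Matrix.rank_le_height _
  rcases lt_or_ge k r with hcase | hcase
  · omega
  · by_cases hsmall : r < (n + 3) / 2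
    · have hB := claimB F n r α hr hsmall ((n + 2) / 2 - k) k m hkm (by omega)
      omega
    · have hk : k = (n + 2) / 2 := by omega
      subst hk
      have hm : m = (n + 3) / 2 := by omega
      subst hm
      rw [hr]
      omega

/-- if `rank H_{n₁,n₂}(α) = r` and `l+m-2 = n`, then
`rank H_{l,m}(α) = r` when `min{l,m} ≥ r` and `rank H_{l,m}(α) = min{l,m}` otherwise. -/
theorem stmt_3 (F : Type) [Field F] [Fintype F] (n l m r : ℕ) (α : ℕ → F)
    (hl : 1 ≤ l) (hm : 1 ≤ m) (hlm : l + m = n + 2)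
    (hr : (hankel F ((n + 2) / 2) ((n + 3) / 2) α).rank = r) :
    (r ≤ min l m → (hankel F l m α).rank = r) ∧
    (min l m < r → (hankel F l m α).rank = min l m) := by
  have key : (hankel F l m α).rank = min (min l m) r := by
    by_cases hcase : l ≤ (n + 2) / 2
    · exact mainL F n l m r α hlm hcase hr
    · have hm2 : m ≤ (n + 2) / 2 := by omega
      rw [rank_hankel_comm F l m α, mainL F n m l r α (by omega) hm2 hr]
      omega
  constructor <;> intro h <;> omega
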